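/- Let $B$ be a nonnegative random variable with finite mean satisfying $\mathbb{E}\left[\frac{B^2}{1+B}\right] = \varepsilon\, \mathbb{E}\left[\frac{1}{1+B}\right]$ for some $0 < \varepsilon \le 1$, and suppose $\mathbb{E}[B] = \mathbb{E}\left[\frac{\varepsilon + B}{1+B}\right]$. Then $\mathbb{E}[B] \le 2 \sqrt{\varepsilon}$. -/

import Mathlib

open MeasureTheory

theorem stmt_4 {Ω : Type*} [MeasurableSpace Ω] (μ : Measure Ω) [IsProbabilityMeasure μ]
    (B : Ω → ℝ) (ε : ℝ) (hε0 : 0 < ε) (hε1 : ε ≤ 1)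
    (hB : Integrable B μ) (hpos : ∀ ω, 0 ≤ B ω)
    (hid : ∫ ω, (B ω) ^ 2 / (1 + B ω) ∂μ = ε * ∫ ω, 1 / (1 + B ω) ∂μ)
    (hmean : ∫ ω, B ω ∂μ = ∫ ω, (ε + B ω) / (1 + B ω) ∂μ) :
    ∫ ω, B ω ∂μ ≤ 2 * Real.sqrt ε := by
  have hm : AEMeasurable B μ := hB.aemeasurable
  have h1B : ∀ ω, (0:ℝ) < 1 + B ω := fun ω => by linarith [hpos ω]
  set g : Ω → ℝ := fun ω => (B ω) ^ 2 / (1 + B ω) with hg_def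
  set f : Ω → ℝ := fun ω => B ω / (1 + B ω) with hf_def
  have hden : AEMeasurable (fun ω => 1 + B ω) μ := aemeasurable_const.add hm
  have hgm : AEMeasurable g μ := (hm.pow_const 2).div hden
  have hfm : AEMeasurable f μ := hm.div hden
  have hg_nonneg : ∀ ω, 0 ≤ g ω := fun ω => div_nonneg (sq_nonneg _) (h1B ω).le
  have hf_nonneg : ∀ ω, 0 ≤ f ω := fun ω => div_nonneg (hpos ω) (h1B ω).le
  have hf_le_one : ∀ ω, f ω ≤ 1 := fun ω =>
    (div_le_one (h1B ω)).2 (by linarith [hpos ω])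
  have hg_le_B : ∀ ω, g ω ≤ B ω := fun ω => by
    rw [hg_def, div_le_iff₀ (h1B ω)]; nlinarith [hpos ω]
  have hgint : Integrable g μ := by
    refine hB.mono' hgm.aestronglyMeasurable (Filter.Eventually.of_forall fun ω => ?_)
    rw [Real.norm_eq_abs, abs_of_nonneg (hg_nonneg ω)]; exact hg_le_B ω
  have hfint : Integrable f μ := by
    refine (integrable_const (1:ℝ)).mono' hfm.aestronglyMeasurable
      (Filter.Eventually.of_forall fun ω => ?_)
    rw [Real.norm_eq_abs, abs_of_nonneg (hf_nonneg ω)]; exact hf_le_one ω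
  have hf2int : Integrable (fun ω => f ω ^ 2) μ := by
    refine (integrable_const (1:ℝ)).mono' (hfm.pow_const 2).aestronglyMeasurable
      (Filter.Eventually.of_forall fun ω => ?_)
    rw [Real.norm_eq_abs, abs_of_nonneg (sq_nonneg (f ω))]
    nlinarith [hf_nonneg ω, hf_le_one ω]
  have hinvint : Integrable (fun ω => 1 / (1 + B ω)) μ := by
    refine (integrable_const (1:ℝ)).mono' (aemeasurable_const.div hden).aestronglyMeasurable
      (Filter.Eventually.of_forall fun ω => ?_)
    rw [Real.norm_eq_abs, abs_of_nonneg (div_nonneg zero_le_one (h1B ω).le)]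
    exact (div_le_one (h1B ω)).2 (by linarith [hpos ω])
  -- ∫ 1/(1+B) ≤ 1
  have hinv_le : ∫ ω, 1 / (1 + B ω) ∂μ ≤ 1 := by
    calc ∫ ω, 1 / (1 + B ω) ∂μ ≤ ∫ _ω, (1:ℝ) ∂μ :=
          integral_mono hinvint (integrable_const 1)
            (fun ω => (div_le_one (h1B ω)).2 (by linarith [hpos ω]))
      _ = 1 := by simp
  have hinv_nonneg : 0 ≤ ∫ ω, 1 / (1 + B ω) ∂μ :=
    integral_nonneg fun ω => div_nonneg zero_le_one (h1B ω).le
  -- ∫ g ≤ ε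
  have hg_le : ∫ ω, g ω ∂μ ≤ ε := by
    rw [hg_def]
    calc ∫ ω, (B ω) ^ 2 / (1 + B ω) ∂μ = ε * ∫ ω, 1 / (1 + B ω) ∂μ := hid
      _ ≤ ε * 1 := by nlinarith
      _ = ε := mul_one ε
  -- ∫ f² ≤ ∫ g
  have hf2_le_g : ∫ ω, f ω ^ 2 ∂μ ≤ ∫ ω, g ω ∂μ := by
    refine integral_mono hf2int hgint fun ω => ?_
    rw [hf_def, hg_def]
    simp only [div_pow]
    rw [div_le_div_iff₀ (pow_pos (h1B ω) 2) (h1B ω)]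
    nlinarith [hpos ω]
  -- Cauchy-Schwarz: (∫ f)² ≤ ∫ f²
  set m : ℝ := ∫ ω, f ω ∂μ with hm_def
  have hm_nonneg : 0 ≤ m := integral_nonneg hf_nonneg
  have hsq : m ^ 2 ≤ ∫ ω, f ω ^ 2 ∂μ := by
    have h0 : 0 ≤ ∫ ω, (f ω - m) ^ 2 ∂μ := integral_nonneg fun ω => sq_nonneg _
    have hexp : ∫ ω, (f ω - m) ^ 2 ∂μ = (∫ ω, f ω ^ 2 ∂μ) - m ^ 2 := by
      have : ∀ ω, (f ω - m) ^ 2 = f ω ^ 2 - 2 * m * f ω + m ^ 2 := fun ω => by ring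
      simp_rw [this]
      have hI1 : Integrable (fun ω => f ω ^ 2 - 2 * m * f ω) μ :=
        hf2int.sub (hfint.const_mul (2 * m))
      rw [integral_add hI1 (integrable_const _),
        integral_sub hf2int (hfint.const_mul (2 * m)), integral_const_mul, integral_const]
      simp only [measure_univ, probReal_univ, ENNReal.toReal_one, smul_eq_mul, one_mul, ← hm_def]
      ring
    linarith [hexp ▸ h0]
  -- m ≤ √ε
  have hm_le : m ≤ Real.sqrt ε := by
    have h1 : m ^ 2 ≤ ε := le_trans hsq (le_trans hf2_le_g hg_le)
    calc m = Real.sqrt (m ^ 2) := (Real.sqrt_sq hm_nonneg).symm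
      _ ≤ Real.sqrt ε := Real.sqrt_le_sqrt h1
  have hε_le : ε ≤ Real.sqrt ε := by
    nlinarith [Real.sq_sqrt hε0.le, Real.sqrt_nonneg ε]
  -- ∫ B = ∫ g + ∫ f
  have hsplit : ∫ ω, B ω ∂μ = (∫ ω, g ω ∂μ) + m := by
    rw [hm_def, ← integral_add hgint hfint]
    refine integral_congr_ae (Filter.Eventually.of_forall fun ω => ?_)
    show B ω = B ω ^ 2 / (1 + B ω) + B ω / (1 + B ω)
    rw [← add_div, eq_div_iff (h1B ω).ne']
    ring
  calc ∫ ω, B ω ∂μ = (∫ ω, g ω ∂μ) + m := hsplit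
    _ ≤ ε + Real.sqrt ε := add_le_add hg_le hm_le
    _ ≤ Real.sqrt ε + Real.sqrt ε := by linarith
    _ = 2 * Real.sqrt ε := by ring
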